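/- Let M ≥ 2, D = (M+2)(M-1)/2, and let φ_1, ..., φ_N be unit vectors in ℝ^M. Then there exist unit vectors y_1, ..., y_N in ℝ^D such that for all j, l ∈ {1, ..., N}, ⟨φ_j, φ_l⟩^2 = 1/M + ((M-1)/M)·⟨y_j, y_l⟩. -/

import Mathlib

open Finset

private def symW (M : ℕ) : Submodule ℝ (EuclideanSpace ℝ (Fin M × Fin M)) where
  carrier := {X | (∀ p q, X (p, q) = X (q, p)) ∧ ∑ p, X (p, p) = 0}
  add_mem' := by
    rintro X Y ⟨hX1, hX2⟩ ⟨hY1, hY2⟩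
    refine ⟨fun p q => by simp [hX1 p q, hY1 p q], ?_⟩
    simp [Finset.sum_add_distrib, hX2, hY2]
  zero_mem' := by simp
  smul_mem' := by
    rintro c X ⟨h1, h2⟩
    refine ⟨fun p q => by simp [h1 p q], ?_⟩
    simp [← Finset.mul_sum, h2]

private lemma card_lt_pairs (M : ℕ) :
    Fintype.card {p : Fin M × Fin M // p.1 < p.2} = M * (M - 1) / 2 := by
  rw [Fintype.card_subtype]
  rw [Finset.card_filter]
  rw [Fintype.sum_prod_type_right]
  have : ∀ q : Fin M, (∑ p : Fin M, if (p, q).1 < (p, q).2 then 1 else 0) = (q : ℕ) := by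
    intro q
    rw [← Finset.card_filter]
    rw [show (filter (fun p => p < q) univ) = Finset.Iio q from by ext; simp]
    exact Fin.card_Iio q
  rw [Finset.sum_congr rfl fun q _ => this q]
  rw [Fin.sum_univ_eq_sum_range (fun i => i) M]
  rw [Finset.sum_range_id]


private lemma finrank_symW (M : ℕ) (hM : 2 ≤ M) :
    Module.finrank ℝ (symW M) ≤ (M + 2) * (M - 1) / 2 := by
  have hlt : ∀ i : Fin (M - 1), (i : ℕ) < M := fun i => lt_of_lt_of_le i.2 (Nat.sub_le M 1)
  let T : symW M →ₗ[ℝ] ({p : Fin M × Fin M // p.1 < p.2} → ℝ) × (Fin (M - 1) → ℝ) :=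
    { toFun := fun X => (fun s => (X : EuclideanSpace ℝ (Fin M × Fin M)) s.1,
        fun i => (X : EuclideanSpace ℝ (Fin M × Fin M)) (⟨i, hlt i⟩, ⟨i, hlt i⟩))
      map_add' := fun X Y => by ext <;> simp
      map_smul' := fun c X => by ext <;> simp }
  have hT : Function.Injective T := by
    rw [injective_iff_map_eq_zero]
    intro X hX
    obtain ⟨hsym, htr⟩ := X.2
    have hfst := congrArg Prod.fst hX
    have hsnd := congrArg Prod.snd hX
    have h1 : ∀ p q : Fin M, p < q → (X : EuclideanSpace ℝ (Fin M × Fin M)) (p, q) = 0 := by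
      intro p q h
      simpa [T] using congrFun hfst ⟨(p, q), h⟩
    have h2 : ∀ i : Fin M, (i : ℕ) < M - 1 → (X : EuclideanSpace ℝ (Fin M × Fin M)) (i, i) = 0 := by
      intro i hi
      have := congrFun hsnd ⟨(i : ℕ), hi⟩
      simpa [T, Fin.ext_iff] using this
    have hlast : ∀ i : Fin M, (X : EuclideanSpace ℝ (Fin M × Fin M)) (i, i) = 0 := by
      intro i
      rcases lt_or_ge (i : ℕ) (M - 1) with h | h
      · exact h2 i h
      · have hieq : (i : ℕ) = M - 1 := le_antisymm (Nat.lt_succ_iff.mp (by omega)) h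
        have := htr
        rw [Finset.sum_eq_single i] at this
        · exact this
        · intro b _ hb
          apply h2
          have : (b : ℕ) ≠ M - 1 := fun hc => hb (Fin.ext (hc.trans hieq.symm))
          omega
        · simp
    apply Subtype.ext
    refine PiLp.ext fun p => ?_
    obtain ⟨p1, p2⟩ := p
    rcases lt_trichotomy p1 p2 with h | h | h
    · exact h1 p1 p2 h
    · subst h; exact hlast p1
    · rw [hsym p1 p2]; exact h1 p2 p1 h
  have := LinearMap.finrank_le_finrank_of_injective hT
  rw [Module.finrank_prod, Module.finrank_fintype_fun_eq_card,
    Module.finrank_fintype_fun_eq_card, card_lt_pairs, Fintype.card_fin] at this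
  refine this.trans (le_of_eq ?_)
  obtain ⟨m, rfl⟩ : ∃ m, M = m + 1 := ⟨M - 1, by omega⟩
  obtain ⟨k, hk⟩ := Nat.even_mul_succ_self m
  have e1 : (m + 1) * m = 2 * k := by rw [mul_comm]; omega
  have e2 : (m + 1 + 2) * (m + 1 - 1) = 2 * (k + m) := by
    simp only [Nat.add_sub_cancel]; nlinarith [hk]
  have e2' : (m + 1 + 2) * m = 2 * (k + m) := by simpa using e2
  rw [show m + 1 - 1 = m from rfl, e1, e2',
    Nat.mul_div_cancel_left k (by norm_num), Nat.mul_div_cancel_left (k + m) (by norm_num)]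

private lemma inner_B_calc {M : ℕ} (hM : (M : ℝ) ≠ 0) (a b : EuclideanSpace ℝ (Fin M))
    (ha : ∑ p, a p * a p = 1) (hb : ∑ p, b p * b p = 1) :
    (∑ p : Fin M × Fin M, (a p.1 * a p.2 - if p.1 = p.2 then 1 / (M : ℝ) else 0) *
      (b p.1 * b p.2 - if p.1 = p.2 then 1 / (M : ℝ) else 0))
      = (∑ p, a p * b p) ^ 2 - 1 / M := by
  have key : ∀ p q : Fin M,
      (a p * a q - if p = q then 1 / (M : ℝ) else 0) *
        (b p * b q - if p = q then 1 / (M : ℝ) else 0)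
      = (a p * b p) * (a q * b q) -
        (if p = q then (a p * a q) / M + (b p * b q) / M - 1 / (M : ℝ) ^ 2 else 0) := by
    intro p q
    by_cases h : p = q
    · subst h; simp; field_simp; ring
    · simp [h]; ring
  rw [Fintype.sum_prod_type]
  simp_rw [key]
  simp only [Finset.sum_sub_distrib]
  have e1 : (∑ p : Fin M, ∑ q : Fin M, (a p * b p) * (a q * b q))
      = (∑ p, a p * b p) ^ 2 := by
    rw [sq, Finset.sum_mul_sum]
  have e2 : (∑ p : Fin M, ∑ q : Fin M,
      (if p = q then (a p * a q) / M + (b p * b q) / M - 1 / (M : ℝ) ^ 2 else 0)) = 1 / (M : ℝ) := by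
    simp only [Finset.sum_ite_eq, Finset.mem_univ, if_true]
    simp only [Finset.sum_sub_distrib, Finset.sum_add_distrib]
    rw [← Finset.sum_div, ← Finset.sum_div, ha, hb, Finset.sum_const, Finset.card_univ,
      Fintype.card_fin]
    field_simp
    ring
    rw [← mul_pow, mul_inv_cancel₀ hM]; norm_num
  rw [e1, e2]

/-- (Conway–Hardin–Sloane spherical embedding, real case.)
For `M ≥ 2`, `D = (M+2)(M-1)/2`, and unit vectors `φ_1, ..., φ_N` in `ℝ^M`, there exist
unit vectors `y_1, ..., y_N` in `ℝ^D` with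
`⟨φ_j, φ_l⟩² = 1/M + ((M-1)/M) ⟨y_j, y_l⟩` for all `j, l`. -/
theorem spherical_embedding_real {M N : ℕ} (hM : 2 ≤ M)
    (φ : Fin N → EuclideanSpace ℝ (Fin M))
    (hunit : ∀ j, ‖φ j‖ = 1) :
    ∃ y : Fin N → EuclideanSpace ℝ (Fin ((M + 2) * (M - 1) / 2)),
      (∀ j, ‖y j‖ = 1) ∧
      ∀ j l, (inner ℝ (φ j) (φ l) : ℝ) ^ 2
        = 1 / (M : ℝ) + ((M : ℝ) - 1) / M * (inner ℝ (y j) (y l) : ℝ) := by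
  classical
  have hM0 : (M : ℝ) ≠ 0 := Nat.cast_ne_zero.mpr (by omega)
  have hM1R : (1 : ℝ) < (M : ℝ) := by exact_mod_cast (by omega : 1 < M)
  have hM1 : (M : ℝ) - 1 ≠ 0 := ne_of_gt (by linarith)
  have hsq : ∀ j, ∑ p, φ j p * φ j p = 1 := by
    intro j
    have h := real_inner_self_eq_norm_sq (φ j)
    rw [hunit j] at h
    rw [PiLp.inner_apply] at h
    simp only [RCLike.inner_apply, conj_trivial, one_pow] at h; exact h
  have hinnerφ : ∀ j l, (inner ℝ (φ j) (φ l) : ℝ) = ∑ p, φ j p * φ l p := by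
    intro j l
    simp [PiLp.inner_apply, RCLike.inner_apply, conj_trivial, mul_comm]
  let B : Fin N → EuclideanSpace ℝ (Fin M × Fin M) := fun j =>
    WithLp.toLp 2 (fun p : Fin M × Fin M => φ j p.1 * φ j p.2 - if p.1 = p.2 then 1 / (M : ℝ) else 0)
  have hBapp : ∀ j p, B j p = φ j p.1 * φ j p.2 - if p.1 = p.2 then 1 / (M : ℝ) else 0 :=
    fun j p => rfl
  have hBinner : ∀ j l, (inner ℝ (B j) (B l) : ℝ) = (inner ℝ (φ j) (φ l) : ℝ) ^ 2 - 1 / M := by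
    intro j l
    rw [PiLp.inner_apply]
    simp only [RCLike.inner_apply, conj_trivial]
    have := inner_B_calc hM0 (φ l) (φ j) (hsq l) (hsq j)
    rw [real_inner_comm, hinnerφ]
    simpa [hBapp] using this
  have hBmem : ∀ j, B j ∈ symW M := by
    intro j
    constructor
    · intro p q
      rw [hBapp, hBapp]
      simp only [mul_comm]
      congr 1
      simp [eq_comm]
    · simp only [hBapp, if_pos rfl]
      rw [Finset.sum_sub_distrib, hsq j, Finset.sum_const, Finset.card_univ, Fintype.card_fin]
      simp only [if_true, nsmul_eq_mul]
      field_simp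
      norm_num
  set c := Real.sqrt ((M : ℝ) / ((M : ℝ) - 1)) with hc
  have hc2 : c ^ 2 = (M : ℝ) / ((M : ℝ) - 1) := Real.sq_sqrt (div_nonneg (by positivity) (by linarith))
  let A : Fin N → EuclideanSpace ℝ (Fin M × Fin M) := fun j => c • B j
  have hAinner : ∀ j l, (inner ℝ (A j) (A l) : ℝ)
      = ((M : ℝ) / ((M : ℝ) - 1)) * ((inner ℝ (φ j) (φ l) : ℝ) ^ 2 - 1 / M) := by
    intro j l
    show (inner ℝ (c • B j) (c • B l) : ℝ) = _
    rw [real_inner_smul_left, real_inner_smul_right, hBinner, ← hc2]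
    ring
  have hAmem : ∀ j, A j ∈ symW M := fun j => Submodule.smul_mem _ c (hBmem j)
  let AW : Fin N → symW M := fun j => ⟨A j, hAmem j⟩
  set d := Module.finrank ℝ (symW M) with hdd
  have hdD : d ≤ (M + 2) * (M - 1) / 2 := finrank_symW M hM
  let ob := stdOrthonormalBasis ℝ (symW M)
  let o : Fin d → EuclideanSpace ℝ (Fin ((M + 2) * (M - 1) / 2)) :=
    fun i => EuclideanSpace.single (Fin.castLE hdD i) 1
  have ho : Orthonormal ℝ o :=
    EuclideanSpace.orthonormal_single.comp _ (Fin.castLE_injective hdD)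
  let y : Fin N → EuclideanSpace ℝ (Fin ((M + 2) * (M - 1) / 2)) :=
    fun j => ∑ i, ob.repr (AW j) i • o i
  have hyinner : ∀ j l, (inner ℝ (y j) (y l) : ℝ) = (inner ℝ (A j) (A l) : ℝ) := by
    intro j l
    show (inner ℝ (∑ i, ob.repr (AW j) i • o i) (∑ i, ob.repr (AW l) i • o i) : ℝ) = _
    rw [ho.inner_sum]
    simp only [conj_trivial]
    have h2 := ob.repr.inner_map_map (AW j) (AW l)
    rw [PiLp.inner_apply] at h2
    simp only [RCLike.inner_apply, conj_trivial] at h2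
    rw [show (∑ x, ob.repr (AW l) x * ob.repr (AW j) x) = ∑ x, ob.repr (AW j) x * ob.repr (AW l) x from
      Finset.sum_congr rfl fun x _ => mul_comm _ _] at h2
    rw [h2]
    exact Submodule.coe_inner _ _ _
  have hinnerself : ∀ j, (inner ℝ (φ j) (φ j) : ℝ) = 1 := by
    intro j
    rw [real_inner_self_eq_norm_sq, hunit j]; norm_num
  have hy1 : ∀ j, ‖y j‖ = 1 := by
    intro j
    have h1 : (inner ℝ (y j) (y j) : ℝ) = 1 := by
      rw [hyinner, hAinner, hinnerself]
      field_simp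
    have h2 := real_inner_self_eq_norm_sq (y j)
    nlinarith [norm_nonneg (y j), h2.symm.trans h1]
  refine ⟨y, hy1, fun j l => ?_⟩
  rw [hyinner, hAinner]
  field_simp
  ring
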